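/- Let υ_j = 1/(υ'_j·∏_{l≠j}(α_j−α_l)). For every t ∈ {0,…,ℓ} and i ≥ 0, the coefficient of the formal power series T^(t)(x) = R̄(x)^t/Ḡ(x) at index i+(t−1)(n−1) equals Σ_{j=1}^n υ_j · (r_j^t/υ'_j^{t−1}) · α_j^i = Σ_{j=1}^n υ_j·υ'_j·(r_j/υ'_j)^t·α_j^i, with the convention that coefficients at negative indices are zero (for t = 0 and i < n−1 the right–hand sum indeed vanishes). -/

import Mathlib

open Polynomial

section Aux

variable {F : Type*} [Field F]

/-- geometric series is inverse of `1 - aX`. -/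
private lemma aux_geom (a : F) :
    ((1 - C a * X : F[X]) : PowerSeries F) * (PowerSeries.mk fun k => a ^ k) = 1 := by
  have hco : ((1 - C a * X : F[X]) : PowerSeries F)
      = 1 - PowerSeries.C (R := F) a * PowerSeries.X := by
    push_cast
    rfl
  rw [hco]
  have h2 : ((1 - PowerSeries.C (R := F) a * PowerSeries.X) : PowerSeries F)
      * (PowerSeries.mk fun k => a ^ k)
      = (PowerSeries.mk fun k => a ^ k)
        - (PowerSeries.C (R := F) a * PowerSeries.mk fun k => a ^ k) * PowerSeries.X := by ring
  rw [h2]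
  ext n
  cases n with
  | zero => simp
  | succ n =>
    rw [map_sub, PowerSeries.coeff_succ_mul_X, PowerSeries.coeff_C_mul]
    simp [pow_succ, mul_comm]

private lemma aux_prod_dvd {ι : Type*} [DecidableEq ι] (s : Finset ι) (β : ι → F)
    (hβ : Set.InjOn β s) (p : F[X]) (hp : ∀ j ∈ s, p.eval (β j) = 0) :
    (∏ j ∈ s, (X - C (β j))) ∣ p := by
  classical
  induction s using Finset.induction generalizing p with
  | empty => simpa using one_dvd p
  | @insert a s ha ih =>
    have h1 : (X - C (β a)) ∣ p :=
      dvd_iff_isRoot.2 (hp a (Finset.mem_insert_self a s))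
    obtain ⟨q, hq⟩ := h1
    have hq0 : ∀ j ∈ s, q.eval (β j) = 0 := by
      intro j hj
      have hne : β j - β a ≠ 0 := by
        refine sub_ne_zero.2 fun h => ha ?_
        rwa [hβ (Finset.mem_insert.2 (Or.inr hj)) (Finset.mem_insert_self a s) h] at hj
      have := hp j (Finset.mem_insert.2 (Or.inr hj))
      rw [hq, eval_mul, eval_sub, eval_X, eval_C] at this
      exact (mul_eq_zero.1 this).resolve_left hne
    obtain ⟨u, hu⟩ := ih (fun x hx y hy h => hβ (Finset.mem_insert.2 (Or.inr hx))
      (Finset.mem_insert.2 (Or.inr hy)) h) q hq0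
    exact ⟨u, by rw [Finset.prod_insert ha, hq, hu]; ring⟩

/-- Lagrange-type identity: for `i < n - 1`, the sum `Σ_j α_j^i / ∏_{l≠j}(α_j - α_l)` vanishes. -/
private lemma aux_lag {n : ℕ} (α : Fin n → F) (hα : Function.Injective α)
    (i : ℕ) (hi : i < n - 1) :
    ∑ j, (∏ l ∈ Finset.univ.erase j, (α j - α l))⁻¹ * α j ^ i = 0 := by
  classical
  have hn2 : 2 ≤ n := by omega
  have hprod_ne : ∀ j : Fin n, (∏ l ∈ Finset.univ.erase j, (α j - α l)) ≠ 0 := by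
    intro j
    refine Finset.prod_ne_zero_iff.2 fun l hl => sub_ne_zero.2 fun h => ?_
    exact (Finset.ne_of_mem_erase hl) (hα h).symm
  set c : Fin n → F := fun j => (∏ l ∈ Finset.univ.erase j, (α j - α l))⁻¹ * α j ^ i with hc
  set Q : F[X] := ∑ j, C (c j) * ∏ l ∈ Finset.univ.erase j, (X - C (α l)) with hQ
  have hmonic : ∀ j : Fin n, (∏ l ∈ Finset.univ.erase j, (X - C (α l))).Monic :=
    fun j => monic_prod_of_monic _ _ fun l _ => monic_X_sub_C _
  have hdeg : ∀ j : Fin n, (∏ l ∈ Finset.univ.erase j, (X - C (α l))).natDegree = n - 1 := by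
    intro j
    rw [natDegree_prod _ _ fun l _ => X_sub_C_ne_zero (α l)]
    simp [Finset.card_erase_of_mem]
  have hQeval : ∀ m, Q.eval (α m) = α m ^ i := by
    intro m
    rw [hQ, eval_finset_sum, Finset.sum_eq_single m]
    · rw [eval_mul, eval_C, eval_prod]
      simp only [eval_sub, eval_X, eval_C]
      rw [hc]
      show (∏ l ∈ Finset.univ.erase m, (α m - α l))⁻¹ * α m ^ i
          * ∏ l ∈ Finset.univ.erase m, (α m - α l) = α m ^ i
      rw [mul_comm ((∏ l ∈ Finset.univ.erase m, (α m - α l))⁻¹) (α m ^ i), mul_assoc,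
        inv_mul_cancel₀ (hprod_ne m), mul_one]
    · intro j _ hj
      rw [eval_mul, eval_prod]
      refine mul_eq_zero_of_right _ ?_
      refine Finset.prod_eq_zero (Finset.mem_erase.2 ⟨fun h => hj h.symm, Finset.mem_univ m⟩) ?_
      simp
    · simp
  have hQX : Q = X ^ i := by
    refine eq_of_degrees_lt_of_eval_index_eq (v := α) Finset.univ hα.injOn ?_ ?_
      fun m _ => by rw [hQeval m, eval_pow, eval_X]
    · have hcard : ((Finset.univ : Finset (Fin n)).card : WithBot ℕ) = (n : ℕ) := by simp
      rw [hcard]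
      refine lt_of_le_of_lt (degree_sum_le _ _) ?_
      rw [Finset.sup_lt_iff (by exact_mod_cast WithBot.bot_lt_coe n)]
      intro j _
      refine lt_of_le_of_lt (degree_mul_le _ _) ?_
      have h2 : (∏ l ∈ Finset.univ.erase j, (X - C (α l))).degree = ((n - 1 : ℕ) : WithBot ℕ) := by
        rw [degree_eq_natDegree (hmonic j).ne_zero, hdeg j]
      calc (C (c j)).degree + (∏ l ∈ Finset.univ.erase j, (X - C (α l))).degree
          ≤ 0 + ((n - 1 : ℕ) : WithBot ℕ) := add_le_add degree_C_le h2.le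
        _ < (n : ℕ) := by rw [zero_add]; exact_mod_cast Nat.sub_lt (by omega) one_pos
    · rw [degree_X_pow]
      have : ((Finset.univ : Finset (Fin n)).card : WithBot ℕ) = (n : ℕ) := by simp
      rw [this]
      exact_mod_cast by omega
  have hco : ∀ j : Fin n, (∏ l ∈ Finset.univ.erase j, (X - C (α l))).coeff (n - 1) = 1 := by
    intro j
    have := (hmonic j).coeff_natDegree
    rwa [hdeg j] at this
  have h2 := congrArg (fun p : F[X] => p.coeff (n - 1)) hQX
  simp only [hQ, finset_sum_coeff, coeff_C_mul, coeff_X_pow] at h2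
  simp only [hco, mul_one] at h2
  rw [if_neg (by omega)] at h2
  exact h2

end Aux

/-- Explicit formula for the generalized syndromes of the reformulated Sudan
interpolation problem: the coefficient of the power series
`T^(t)(x) = R̄(x)^t/Ḡ(x)` at index `i+(t−1)(n−1)` equals
`Σ_j υ_j·υ'_j·(r_j/υ'_j)^t·α_j^i`, where `υ_j = 1/(υ'_j·∏_{l≠j}(α_j−α_l))`;
coefficients at negative indices are zero, and correspondingly for `t = 0` and
`i < n−1` the right-hand sum vanishes. -/
theorem sudan_syndromes_explicit
    (F : Type*) [Field F] (n ℓ : ℕ) (hn : 1 ≤ n)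
    (α υ' : Fin n → F) (hα : Function.Injective α) (hα0 : ∀ i, α i ≠ 0)
    (hυ' : ∀ i, υ' i ≠ 0)
    (r : Fin n → F)
    (R : F[X]) (hRdeg : R.degree < (n : ℕ))
    (hR : ∀ j, R.eval (α j) = r j / υ' j) :
    (∀ t ≤ ℓ, ∀ i : ℕ, n - 1 ≤ i + t * (n - 1) →
        PowerSeries.coeff (R := F) (i + t * (n - 1) - (n - 1))
            ((R.reflect (n - 1) : PowerSeries F) ^ t *
              ((∏ j, (1 - C (α j) * X) : F[X]) : PowerSeries F)⁻¹) =
          ∑ j, (1 / (υ' j * ∏ l ∈ Finset.univ.erase j, (α j - α l))) * υ' j *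
            (r j / υ' j) ^ t * α j ^ i) ∧
      (∀ i : ℕ, i < n - 1 →
        ∑ j, (1 / (υ' j * ∏ l ∈ Finset.univ.erase j, (α j - α l))) * υ' j *
          (r j / υ' j) ^ (0 : ℕ) * α j ^ i = 0) := by
  classical
  have hprod_ne : ∀ j, (∏ l ∈ Finset.univ.erase j, (α j - α l)) ≠ 0 := by
    intro j
    refine Finset.prod_ne_zero_iff.2 fun l hl => sub_ne_zero.2 fun h => ?_
    exact (Finset.ne_of_mem_erase hl) (hα h).symm
  constructor
  · intro t _ i hi
    set k := i + t * (n - 1) - (n - 1) with hk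
    -- G and its inverse
    set G : F[X] := ∏ j, (1 - C (α j) * X) with hG
    have hG0 : PowerSeries.constantCoeff (R := F) (G : PowerSeries F) = 1 := by
      rw [← PowerSeries.coeff_zero_eq_constantCoeff_apply, Polynomial.coeff_coe,
        coeff_zero_eq_eval_zero, hG, eval_prod]
      simp
    have hGinv : (G : PowerSeries F) * (G : PowerSeries F)⁻¹ = 1 :=
      PowerSeries.mul_inv_cancel _ (by rw [hG0]; exact one_ne_zero)
    -- geometric series
    set S : Fin n → PowerSeries F := fun j => PowerSeries.mk fun m => α j ^ m with hS
    have hSj : ∀ j, ((∏ l ∈ Finset.univ.erase j, (1 - C (α l) * X) : F[X]) : PowerSeries F)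
        * (G : PowerSeries F)⁻¹ = S j := by
      intro j
      have hfac : ((1 - C (α j) * X : F[X]) : PowerSeries F)
          * ((∏ l ∈ Finset.univ.erase j, (1 - C (α l) * X) : F[X]) : PowerSeries F)
          = (G : PowerSeries F) := by
        rw [← Polynomial.coe_mul, hG]
        exact congrArg _ (Finset.mul_prod_erase Finset.univ (fun l => 1 - C (α l) * X)
          (Finset.mem_univ j))
      calc ((∏ l ∈ Finset.univ.erase j, (1 - C (α l) * X) : F[X]) : PowerSeries F)
            * (G : PowerSeries F)⁻¹
          = ((∏ l ∈ Finset.univ.erase j, (1 - C (α l) * X) : F[X]) : PowerSeries F)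
              * (G : PowerSeries F)⁻¹
              * (((1 - C (α j) * X : F[X]) : PowerSeries F) * S j) := by
            rw [hS, aux_geom (α j), mul_one]
        _ = ((1 - C (α j) * X : F[X]) : PowerSeries F)
              * ((∏ l ∈ Finset.univ.erase j, (1 - C (α l) * X) : F[X]) : PowerSeries F)
              * (G : PowerSeries F)⁻¹ * S j := by ring
        _ = S j := by rw [hfac, hGinv, one_mul]
    -- weights
    set w : Fin n → F := fun j => (r j / υ' j) ^ t * α j ^ (n - 1) * (α j ^ (t * (n - 1)))⁻¹
        * (∏ l ∈ Finset.univ.erase j, (α j - α l))⁻¹ with hw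
    set V : F[X] := ∑ j, C (w j) * ∏ l ∈ Finset.univ.erase j, (1 - C (α l) * X) with hV
    -- degree facts
    have hRnat : R.natDegree ≤ n - 1 := by
      rcases eq_or_ne R 0 with h | h
      · simp [h]
      · have hd := degree_eq_natDegree h
        rw [hd, Nat.cast_lt] at hRdeg
        omega
    have hreflnat : (R.reflect (n - 1)).natDegree ≤ n - 1 := by
      refine natDegree_le_iff_coeff_eq_zero.2 fun N hN => ?_
      rw [coeff_reflect, revAt_eq_self_of_lt hN]
      exact coeff_eq_zero_of_natDegree_lt (lt_of_le_of_lt hRnat hN)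
    -- evaluation of the reflected polynomial
    have hrefl_eval : ∀ m, (R.reflect (n - 1)).eval (α m)⁻¹
        = (r m / υ' m) * (α m ^ (n - 1))⁻¹ := by
      intro m
      letI := invertibleOfNonzero (hα0 m)
      have h := Polynomial.eval₂_reflect_mul_pow (RingHom.id F) (α m) (n - 1) R hRnat
      rw [invOf_eq_inv] at h
      have heq : ∀ (x : F) (p : F[X]), eval₂ (RingHom.id F) x p = p.eval x := fun _ _ => rfl
      rw [heq, heq, hR m] at h
      have hpne : α m ^ (n - 1) ≠ 0 := pow_ne_zero _ (hα0 m)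
      exact (eq_mul_inv_iff_mul_eq₀ hpne).2 h
    -- evaluation of V
    have hVeval : ∀ m, V.eval (α m)⁻¹ = (r m / υ' m) ^ t * (α m ^ (t * (n - 1)))⁻¹ := by
      intro m
      rw [hV, eval_finset_sum, Finset.sum_eq_single m]
      · rw [eval_mul, eval_C, eval_prod]
        simp only [eval_sub, eval_one, eval_mul, eval_C, eval_X]
        have hfac2 : ∏ l ∈ Finset.univ.erase m, (1 - α l * (α m)⁻¹)
            = (∏ l ∈ Finset.univ.erase m, (α m - α l)) * ((α m)⁻¹) ^ (n - 1) := by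
          have hcarde : (Finset.univ.erase m).card = n - 1 := by
            simp [Finset.card_erase_of_mem]
          rw [← hcarde, ← Finset.prod_const ((α m)⁻¹), ← Finset.prod_mul_distrib]
          refine Finset.prod_congr rfl fun l _ => ?_
          rw [sub_mul, mul_inv_cancel₀ (hα0 m)]
        rw [hfac2, hw]
        have hpow : α m ^ (n - 1) * ((α m)⁻¹) ^ (n - 1) = 1 := by
          rw [← mul_pow, mul_inv_cancel₀ (hα0 m), one_pow]
        calc (r m / υ' m) ^ t * α m ^ (n - 1) * (α m ^ (t * (n - 1)))⁻¹
              * (∏ l ∈ Finset.univ.erase m, (α m - α l))⁻¹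
              * ((∏ l ∈ Finset.univ.erase m, (α m - α l)) * ((α m)⁻¹) ^ (n - 1))
            = (r m / υ' m) ^ t * (α m ^ (t * (n - 1)))⁻¹
              * ((∏ l ∈ Finset.univ.erase m, (α m - α l))⁻¹
                * (∏ l ∈ Finset.univ.erase m, (α m - α l)))
              * (α m ^ (n - 1) * ((α m)⁻¹) ^ (n - 1)) := by ring
          _ = (r m / υ' m) ^ t * (α m ^ (t * (n - 1)))⁻¹ := by
              rw [inv_mul_cancel₀ (hprod_ne m), hpow, mul_one, mul_one]
      · intro j _ hj
        rw [eval_mul, eval_prod]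
        refine mul_eq_zero_of_right _ ?_
        refine Finset.prod_eq_zero (Finset.mem_erase.2 ⟨fun h => hj h.symm, Finset.mem_univ m⟩) ?_
        simp [mul_inv_cancel₀ (hα0 m)]
      · simp
    -- the difference D and its factorization
    set D : F[X] := (R.reflect (n - 1)) ^ t - V with hD
    have hDeval : ∀ m, D.eval (α m)⁻¹ = 0 := by
      intro m
      rw [hD, eval_sub, eval_pow, hrefl_eval m, hVeval m, mul_pow, inv_pow, ← pow_mul,
        mul_comm (n - 1) t, sub_self]
    have hinj : Set.InjOn (fun j : Fin n => (α j)⁻¹) (Finset.univ : Finset (Fin n)) :=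
      fun x _ y _ h => hα (inv_injective h)
    obtain ⟨q, hq⟩ := aux_prod_dvd Finset.univ (fun j => (α j)⁻¹) hinj D (fun j _ => hDeval j)
    have hcne : (∏ j : Fin n, -α j) ≠ 0 :=
      Finset.prod_ne_zero_iff.2 fun j _ => neg_ne_zero.2 (hα0 j)
    have hGfact : G = C (∏ j : Fin n, -α j) * ∏ j : Fin n, (X - C (α j)⁻¹) := by
      rw [hG, map_prod, ← Finset.prod_mul_distrib]
      refine Finset.prod_congr rfl fun j _ => ?_
      rw [mul_sub, ← C_mul, neg_mul, mul_inv_cancel₀ (hα0 j)]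
      simp
      ring
    set P : F[X] := C ((∏ j : Fin n, -α j)⁻¹) * q with hP
    have hPG : P * G = D := by
      rw [hP, hGfact, hq]
      calc C ((∏ j : Fin n, -α j)⁻¹) * q
            * (C (∏ j : Fin n, -α j) * ∏ j : Fin n, (X - C (α j)⁻¹))
          = C ((∏ j : Fin n, -α j)⁻¹) * C (∏ j : Fin n, -α j)
            * ((∏ j : Fin n, (X - C (α j)⁻¹)) * q) := by ring
        _ = (∏ j : Fin n, (X - C (α j)⁻¹)) * q := by
            rw [← C_mul, inv_mul_cancel₀ hcne, map_one, one_mul]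
    -- coefficient of P at k vanishes
    have hprodmonic : (∏ j : Fin n, (X - C (α j)⁻¹)).Monic :=
      monic_prod_of_monic _ _ fun j _ => monic_X_sub_C _
    have hprodnd : (∏ j : Fin n, (X - C (α j)⁻¹)).natDegree = n := by
      rw [natDegree_prod _ _ fun j _ => X_sub_C_ne_zero _]
      simp
    have hVnd : V.natDegree ≤ n - 1 := by
      rw [hV]
      refine natDegree_sum_le_of_forall_le _ _ fun j _ => ?_
      refine (natDegree_C_mul_le _ _).trans ?_
      refine (natDegree_prod_le _ _).trans ?_
      calc ∑ l ∈ Finset.univ.erase j, (1 - C (α l) * X).natDegree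
          ≤ ∑ l ∈ Finset.univ.erase j, 1 := by
            refine Finset.sum_le_sum fun l _ => ?_
            refine (natDegree_sub_le _ _).trans ?_
            simp only [natDegree_one]
            exact max_le (by omega) ((natDegree_C_mul_le _ _).trans natDegree_X_le)
        _ = n - 1 := by simp [Finset.card_erase_of_mem]
    have hDnd : D.natDegree ≤ i + t * (n - 1) := by
      rw [hD]
      refine (natDegree_sub_le _ _).trans (max_le ?_ ?_)
      · exact (natDegree_pow_le).trans (by
          have := Nat.mul_le_mul_left t hreflnat
          omega)
      · omega
    have hPcoeff : P.coeff k = 0 := by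
      rcases eq_or_ne D 0 with h0 | h0
      · have : q = 0 := by
          rcases mul_eq_zero.1 (hq ▸ h0 : (∏ j : Fin n, (X - C (α j)⁻¹)) * q = 0) with h | h
          · exact absurd h hprodmonic.ne_zero
          · exact h
        rw [hP, this, mul_zero, coeff_zero]
      · have hqne : q ≠ 0 := fun h => h0 (by rw [hq, h, mul_zero])
        have hnd : (∏ j : Fin n, (X - C (α j)⁻¹)).natDegree + q.natDegree = D.natDegree := by
          rw [hq, natDegree_mul hprodmonic.ne_zero hqne]
        rw [hprodnd] at hnd
        have hqlt : q.natDegree < k := by omega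
        rw [hP, coeff_C_mul, coeff_eq_zero_of_natDegree_lt hqlt, mul_zero]
    -- split the power series
    have h1 : ((R.reflect (n - 1)) ^ t : F[X]) = P * G + V := by
      rw [hPG, hD]; ring
    have hsplit : (R.reflect (n - 1) : PowerSeries F) ^ t * (G : PowerSeries F)⁻¹
        = (P : PowerSeries F) + ∑ j, PowerSeries.C (R := F) (w j) * S j := by
      calc (R.reflect (n - 1) : PowerSeries F) ^ t * (G : PowerSeries F)⁻¹
          = (((R.reflect (n - 1)) ^ t : F[X]) : PowerSeries F) * (G : PowerSeries F)⁻¹ := by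
            rw [Polynomial.coe_pow]
        _ = ((P * G + V : F[X]) : PowerSeries F) * (G : PowerSeries F)⁻¹ := by rw [h1]
        _ = (P : PowerSeries F) * ((G : PowerSeries F) * (G : PowerSeries F)⁻¹)
            + (V : PowerSeries F) * (G : PowerSeries F)⁻¹ := by
            rw [Polynomial.coe_add, Polynomial.coe_mul]; ring
        _ = (P : PowerSeries F) + (V : PowerSeries F) * (G : PowerSeries F)⁻¹ := by
            rw [hGinv, mul_one]
        _ = (P : PowerSeries F) + ∑ j, PowerSeries.C (R := F) (w j) * S j := by
            congr 1
            have hcoeV : (V : PowerSeries F) = ∑ j, PowerSeries.C (R := F) (w j)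
                * ((∏ l ∈ Finset.univ.erase j, (1 - C (α l) * X) : F[X]) : PowerSeries F) := by
              rw [hV, ← Polynomial.coeToPowerSeries.ringHom_apply, map_sum]
              refine Finset.sum_congr rfl fun j _ => ?_
              rw [map_mul, Polynomial.coeToPowerSeries.ringHom_apply,
                Polynomial.coeToPowerSeries.ringHom_apply, Polynomial.coe_C]
            rw [hcoeV, Finset.sum_mul]
            exact Finset.sum_congr rfl fun j _ => by rw [mul_assoc, hSj j]
    -- take coefficients
    rw [hsplit, map_add, Polynomial.coeff_coe, hPcoeff, zero_add, map_sum]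
    refine Finset.sum_congr rfl fun j _ => ?_
    rw [PowerSeries.coeff_C_mul, hS]
    simp only [PowerSeries.coeff_mk]
    -- termwise algebra
    have e2 : (1 / (υ' j * ∏ l ∈ Finset.univ.erase j, (α j - α l))) * υ' j
        = (∏ l ∈ Finset.univ.erase j, (α j - α l))⁻¹ := by
      rw [one_div, mul_inv, mul_comm ((υ' j)⁻¹) _, mul_assoc, inv_mul_cancel₀ (hυ' j), mul_one]
    have e1 : α j ^ (n - 1) * α j ^ k = α j ^ i * α j ^ (t * (n - 1)) := by
      rw [← pow_add, ← pow_add]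
      congr 1
      omega
    calc w j * α j ^ k
        = (r j / υ' j) ^ t * (∏ l ∈ Finset.univ.erase j, (α j - α l))⁻¹
          * (α j ^ (n - 1) * α j ^ k) * (α j ^ (t * (n - 1)))⁻¹ := by rw [hw]; ring
      _ = (r j / υ' j) ^ t * (∏ l ∈ Finset.univ.erase j, (α j - α l))⁻¹ * α j ^ i
          * (α j ^ (t * (n - 1)) * (α j ^ (t * (n - 1)))⁻¹) := by rw [e1]; ring
      _ = (r j / υ' j) ^ t * (∏ l ∈ Finset.univ.erase j, (α j - α l))⁻¹ * α j ^ i := by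
          rw [mul_inv_cancel₀ (pow_ne_zero _ (hα0 j)), mul_one]
      _ = (1 / (υ' j * ∏ l ∈ Finset.univ.erase j, (α j - α l))) * υ' j
          * (r j / υ' j) ^ t * α j ^ i := by rw [e2]; ring
  · intro i hi
    have h := aux_lag α hα i hi
    calc ∑ j, (1 / (υ' j * ∏ l ∈ Finset.univ.erase j, (α j - α l))) * υ' j *
          (r j / υ' j) ^ (0 : ℕ) * α j ^ i
        = ∑ j, (∏ l ∈ Finset.univ.erase j, (α j - α l))⁻¹ * α j ^ i := by
          refine Finset.sum_congr rfl fun j _ => ?_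
          have hpu : υ' j * (υ' j * ∏ l ∈ Finset.univ.erase j, (α j - α l))⁻¹
              = (∏ l ∈ Finset.univ.erase j, (α j - α l))⁻¹ := by
            rw [mul_inv, ← mul_assoc, mul_inv_cancel₀ (hυ' j), one_mul]
          rw [pow_zero, mul_one, one_div, mul_comm _ (υ' j), hpu]
      _ = 0 := h
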